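/- Let X = ℂⁿ and Y = ℂᵐ. For unit vectors u, v ∈ X ⊗ Y, the trace norm of the partial transpose (T ⊗ I)(uv*) is at most min(n, m), with equality if and only if both u and v are maximally entangled. -/

import Mathlib

open Matrix Kronecker BigOperators ComplexOrder

noncomputable section

/-- The square root `Matrix.PosSemidef.sqrt` of the older Mathlib (removed since), with its old definition. -/
noncomputable def psdSqrt {n : Type*} [Fintype n] [DecidableEq n] {A : Matrix n n ℂ}
    (hA : A.PosSemidef) : Matrix n n ℂ :=
  hA.1.eigenvectorUnitary.1 * diagonal ((↑) ∘ (√·) ∘ hA.1.eigenvalues) *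
    (star hA.1.eigenvectorUnitary : Matrix n n ℂ)

/-- Trace norm (sum of singular values) of a complex matrix. -/
noncomputable def traceNorm {l m : Type*} [Fintype l] [Fintype m] [DecidableEq m]
    (A : Matrix l m ℂ) : ℝ :=
  ((psdSqrt (Matrix.posSemidef_conjTranspose_mul_self A)).trace).re

/-- Frobenius norm. -/
noncomputable def frobNorm {l m : Type*} [Fintype l] [Fintype m]
    (A : Matrix l m ℂ) : ℝ :=
  Real.sqrt ((Aᴴ * A).trace.re)

/-- Partial transpose on the first tensor factor. -/
def ptranspose {a b : Type*} (X : Matrix (a × b) (a × b) ℂ) : Matrix (a × b) (a × b) ℂ :=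
  Matrix.of fun p q => X (q.1, p.2) (p.1, q.2)

/-- Outer product `u v*`. -/
def outer {a : Type*} (u v : a → ℂ) : Matrix a a ℂ :=
  Matrix.of fun p q => u p * star (v q)

/-- Density operator: positive semidefinite with trace one. -/
def IsDensity {a : Type*} [Fintype a] (ρ : Matrix a a ℂ) : Prop :=
  ρ.PosSemidef ∧ ρ.trace = 1

/-- Maximally entangled unit vector in `ℂⁿ ⊗ ℂᵐ`. -/
def MaxEntangled (n m : ℕ) (u : Fin n × Fin m → ℂ) : Prop :=
  ∃ (x : Fin (min n m) → EuclideanSpace ℂ (Fin n))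
    (y : Fin (min n m) → EuclideanSpace ℂ (Fin m)),
    Orthonormal ℂ x ∧ Orthonormal ℂ y ∧
      ∀ p : Fin n × Fin m,
        u p = (1 / Real.sqrt (min n m) : ℝ) * ∑ i, x i p.1 * y i p.2

/-- Extension `Φ ⊗ I` of a matrix map to a system with ancilla `c`. -/
def tensorExt {a b c : Type*} [Fintype a] [DecidableEq a] [Fintype c]
    (Φ : Matrix a a ℂ →ₗ[ℂ] Matrix b b ℂ)
    (X : Matrix (a × c) (a × c) ℂ) : Matrix (b × c) (b × c) ℂ :=
  Matrix.of fun p q => Φ (Matrix.of fun i j => X (i, p.2) (j, q.2)) p.1 q.1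

/-- Quantum channel: completely positive and trace preserving. -/
def IsChannel {a b : Type*} [Fintype a] [DecidableEq a] [Fintype b]
    (Φ : Matrix a a ℂ →ₗ[ℂ] Matrix b b ℂ) : Prop :=
  (∀ X, (Φ X).trace = X.trace) ∧
    ∀ (k : ℕ) (X : Matrix (a × Fin k) (a × Fin k) ℂ),
      X.PosSemidef → (tensorExt Φ X).PosSemidef

/-- Partial trace over the second tensor factor. -/
def ptraceRight {a b : Type*} [Fintype b] (M : Matrix (a × b) (a × b) ℂ) :
    Matrix a a ℂ :=
  Matrix.of fun i k => ∑ c, M (i, c) (k, c)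

/-- Partial trace over the first tensor factor. -/
def ptraceLeft {a b : Type*} [Fintype a] (M : Matrix (a × b) (a × b) ℂ) :
    Matrix b b ℂ :=
  Matrix.of fun i k => ∑ c, M (c, i) (c, k)

/-- Canonical maximally entangled state `τ = (1/d) vec(I)vec(I)*` on `a ⊗ a`. -/
noncomputable def tauGen {a : Type*} [Fintype a] [DecidableEq a] :
    Matrix (a × a) (a × a) ℂ :=
  Matrix.of fun p q =>
    (Fintype.card a : ℂ)⁻¹ * (if p.1 = p.2 then 1 else 0) * (if q.1 = q.2 then 1 else 0)

/-- The operator `τ ⊗ σ` on `a ⊗ (a ⊗ r)`. -/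
noncomputable def tauSigma {a r : Type*} [Fintype a] [DecidableEq a]
    (σ : Matrix r r ℂ) : Matrix (a × (a × r)) (a × (a × r)) ℂ :=
  Matrix.of fun p q => tauGen (p.1, p.2.1) (q.1, q.2.1) * σ p.2.2 q.2.2

/-- Fidelity of two positive semidefinite matrices. -/
noncomputable def fidelity {a : Type*} [Fintype a] [DecidableEq a]
    {P Q : Matrix a a ℂ} (hP : P.PosSemidef) (hQ : Q.PosSemidef) : ℝ :=
  traceNorm (psdSqrt hP * psdSqrt hQ)

open scoped MatrixOrder in
lemma psdSqrt_eq_cfcSqrt {n : Type*} [Fintype n] [DecidableEq n] {A : Matrix n n ℂ}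
    (hA : A.PosSemidef) : psdSqrt hA = CFC.sqrt A := by
  rw [CFC.sqrt_eq_real_sqrt A (Matrix.nonneg_iff_posSemidef.mpr hA), cfcₙ_eq_cfc,
    Matrix.IsHermitian.cfc_eq hA.1, Matrix.IsHermitian.cfc, Unitary.conjStarAlgAut_apply]
  rfl

open scoped MatrixOrder in
lemma Matrix.PosSemidef.posSemidef_sqrt {n : Type*} [Fintype n] [DecidableEq n]
    {A : Matrix n n ℂ} (hA : A.PosSemidef) : (psdSqrt hA).PosSemidef := by
  rw [psdSqrt_eq_cfcSqrt]; exact Matrix.nonneg_iff_posSemidef.mp (CFC.sqrt_nonneg A)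

open scoped MatrixOrder in
lemma Matrix.PosSemidef.sqrt_mul_self {n : Type*} [Fintype n] [DecidableEq n]
    {A : Matrix n n ℂ} (hA : A.PosSemidef) : psdSqrt hA * psdSqrt hA = A := by
  rw [psdSqrt_eq_cfcSqrt]; exact CFC.sqrt_mul_sqrt_self A (Matrix.nonneg_iff_posSemidef.mpr hA)

open scoped MatrixOrder in
lemma Matrix.PosSemidef.eq_sqrt_of_sq_eq {n : Type*} [Fintype n] [DecidableEq n]
    {A B : Matrix n n ℂ} (hB : B.PosSemidef) (hA : A.PosSemidef) (h : B ^ 2 = A) :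
    B = psdSqrt hA := by
  rw [psdSqrt_eq_cfcSqrt]
  exact (CFC.sqrt_unique (by rw [← pow_two]; exact h) (Matrix.nonneg_iff_posSemidef.mpr hB)).symm

namespace AuxPT

/-- reduced density matrix on first factor -/
def rho1 (n m : ℕ) (w : Fin n × Fin m → ℂ) : Matrix (Fin n) (Fin n) ℂ :=
  Matrix.of fun p k => ∑ j, w (p, j) * star (w (k, j))

variable {n m : ℕ} {w : Fin n × Fin m → ℂ}

lemma rho1_eq (n m : ℕ) (w : Fin n × Fin m → ℂ) :
    rho1 n m w = (Matrix.of fun (j : Fin m) (k : Fin n) => star (w (k, j)))ᴴ *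
      (Matrix.of fun (j : Fin m) (k : Fin n) => star (w (k, j))) := by
  ext p k
  simp [rho1, Matrix.mul_apply]

lemma rho1_posSemidef (n m : ℕ) (w : Fin n × Fin m → ℂ) : (rho1 n m w).PosSemidef := by
  rw [rho1_eq]; exact posSemidef_conjTranspose_mul_self _

lemma rho1_isHermitian (n m : ℕ) (w : Fin n × Fin m → ℂ) : (rho1 n m w).IsHermitian :=
  (rho1_posSemidef n m w).1

lemma rho1_rank_le (n m : ℕ) (w : Fin n × Fin m → ℂ) : (rho1 n m w).rank ≤ min n m := by
  rw [rho1_eq, Matrix.rank_conjTranspose_mul_self]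
  refine le_min ?_ ?_
  · simpa using Matrix.rank_le_card_width (Matrix.of fun (j : Fin m) (k : Fin n) => star (w (k, j)))
  · simpa using Matrix.rank_le_card_height (Matrix.of fun (j : Fin m) (k : Fin n) => star (w (k, j)))

lemma rho1_trace (hw : ∑ p, ‖w p‖ ^ 2 = (1 : ℝ)) : (rho1 n m w).trace = 1 := by
  have : (rho1 n m w).trace = ((∑ p, ‖w p‖ ^ 2 : ℝ) : ℂ) := by
    rw [Matrix.trace]
    push_cast
    rw [Fintype.sum_prod_type]
    simp only [Matrix.diag_apply, rho1, Matrix.of_apply]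
    congr 1; ext p; congr 1; ext j
    rw [Complex.star_def, RCLike.mul_conj]
    norm_cast
  rw [this, hw]; norm_num

lemma trace_eq_sum_eigenvalues {ι : Type*} [Fintype ι] [DecidableEq ι] {A : Matrix ι ι ℂ}
    (hA : A.IsHermitian) : A.trace = ((∑ i, hA.eigenvalues i : ℝ) : ℂ) := by
  conv_lhs => rw [hA.spectral_theorem]
  rw [Unitary.conjStarAlgAut_apply, Matrix.trace_mul_cycle,
    Unitary.coe_star_mul_self, Matrix.one_mul, Matrix.trace_diagonal]
  push_cast
  rfl

lemma trace_sqrt {ι : Type*} [Fintype ι] [DecidableEq ι] {A : Matrix ι ι ℂ}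
    (hA : A.PosSemidef) :
    (psdSqrt hA).trace = ((∑ i, Real.sqrt (hA.1.eigenvalues i) : ℝ) : ℂ) := by
  have h : psdSqrt hA = hA.1.eigenvectorUnitary.1 *
      diagonal (RCLike.ofReal ∘ Real.sqrt ∘ hA.1.eigenvalues) *
      (star hA.1.eigenvectorUnitary.1) := rfl
  rw [h, Matrix.trace_mul_cycle, Unitary.coe_star_mul_self, Matrix.one_mul, Matrix.trace_diagonal]
  push_cast
  rfl

lemma posSemidef_smul_real {ι : Type*} [Fintype ι] {M : Matrix ι ι ℂ}
    (hM : M.PosSemidef) {c : ℝ} (hc : 0 ≤ c) : ((c : ℂ) • M).PosSemidef := by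
  constructor
  · unfold Matrix.IsHermitian
    rw [Matrix.conjTranspose_smul, hM.1]
    congr 1
    simp
  · exact (hM.smul (by exact_mod_cast hc : (0 : ℂ) ≤ (c : ℂ))).2

lemma sum_sqrt_le_sqrt_card {ι : Type*} [Fintype ι] (lam : ι → ℝ)
    (hnn : ∀ i, 0 ≤ lam i) (hsum : ∑ i, lam i = 1) {r : ℕ}
    (hcard : (Finset.univ.filter fun i => lam i ≠ 0).card ≤ r) :
    ∑ i, Real.sqrt (lam i) ≤ Real.sqrt r := by
  classical
  set s := Finset.univ.filter fun i => lam i ≠ 0 with hs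
  have h0 : ∑ i ∈ s, Real.sqrt (lam i) = ∑ i, Real.sqrt (lam i) := by
    refine Finset.sum_subset (Finset.filter_subset _ _) fun i _ hi => ?_
    have : lam i = 0 := by simpa [hs] using hi
    simp [this]
  have h1 : ∑ i ∈ s, lam i = 1 := by
    rw [← hsum]
    refine Finset.sum_subset (Finset.filter_subset _ _) fun i _ hi => by simpa [hs] using hi
  have hcs := Finset.sum_mul_sq_le_sq_mul_sq s (fun _ => 1) (fun i => Real.sqrt (lam i))
  simp only [one_mul, one_pow, Finset.sum_const, nsmul_eq_mul, mul_one] at hcs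
  have h2 : ∑ i ∈ s, Real.sqrt (lam i) ^ 2 = 1 := by
    rw [← h1]; exact Finset.sum_congr rfl fun i _ => Real.sq_sqrt (hnn i)
  rw [h2, mul_one] at hcs
  have h3 : (∑ i, Real.sqrt (lam i)) ^ 2 ≤ (r : ℝ) := by
    rw [← h0]; exact hcs.trans (by exact_mod_cast hcard)
  have h4 : 0 ≤ ∑ i, Real.sqrt (lam i) := Finset.sum_nonneg fun i _ => Real.sqrt_nonneg _
  calc ∑ i, Real.sqrt (lam i) = Real.sqrt ((∑ i, Real.sqrt (lam i)) ^ 2) :=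
        (Real.sqrt_sq h4).symm
    _ ≤ Real.sqrt r := Real.sqrt_le_sqrt h3

lemma eigs_of_sum_sqrt_eq {ι : Type*} [Fintype ι] (lam : ι → ℝ)
    (hnn : ∀ i, 0 ≤ lam i) (hsum : ∑ i, lam i = 1) {r : ℕ}
    (hcard : (Finset.univ.filter fun i => lam i ≠ 0).card ≤ r)
    (heq : ∑ i, Real.sqrt (lam i) = Real.sqrt r) :
    (Finset.univ.filter fun i => lam i ≠ 0).card = r ∧
      ∀ i, lam i ≠ 0 → lam i = (r : ℝ)⁻¹ := by
  classical
  set s := Finset.univ.filter fun i => lam i ≠ 0 with hs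
  have h0 : ∑ i ∈ s, Real.sqrt (lam i) = ∑ i, Real.sqrt (lam i) := by
    refine Finset.sum_subset (Finset.filter_subset _ _) fun i _ hi => ?_
    have : lam i = 0 := by simpa [hs] using hi
    simp [this]
  have h1 : ∑ i ∈ s, lam i = 1 := by
    rw [← hsum]
    refine Finset.sum_subset (Finset.filter_subset _ _) fun i _ hi => by simpa [hs] using hi
  have h2 : ∑ i ∈ s, Real.sqrt (lam i) ^ 2 = 1 := by
    rw [← h1]; exact Finset.sum_congr rfl fun i _ => Real.sq_sqrt (hnn i)
  have hcs := Finset.sum_mul_sq_le_sq_mul_sq s (fun _ => 1) (fun i => Real.sqrt (lam i))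
  simp only [one_mul, one_pow, Finset.sum_const, nsmul_eq_mul, mul_one] at hcs
  rw [h2, mul_one, h0, heq, Real.sq_sqrt (by positivity)] at hcs
  have hcard' : s.card = r := le_antisymm hcard (by exact_mod_cast hcs)
  have hrpos : 0 < r := by
    rcases Nat.eq_zero_or_pos r with h | h
    · exfalso
      have : s = ∅ := Finset.card_eq_zero.mp (by omega)
      rw [this] at h1; simp at h1
    · exact h
  refine ⟨hcard', fun i hi => ?_⟩
  set c : ℝ := (Real.sqrt r)⁻¹ with hc
  have hrR : (0 : ℝ) < r := by exact_mod_cast hrpos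
  have hcsq : c ^ 2 = (r : ℝ)⁻¹ := by
    rw [hc, inv_pow, Real.sq_sqrt hrR.le]
  have key : ∑ i ∈ s, (Real.sqrt (lam i) - c) ^ 2 = 0 := by
    have expand : ∀ j ∈ s, (Real.sqrt (lam j) - c) ^ 2
        = lam j - 2 * c * Real.sqrt (lam j) + c ^ 2 := fun j _ => by
      rw [sub_sq, Real.sq_sqrt (hnn j)]; ring
    rw [Finset.sum_congr rfl expand, Finset.sum_add_distrib, Finset.sum_sub_distrib,
      Finset.sum_const, h1, ← Finset.mul_sum, h0, heq, hcard', hcsq, nsmul_eq_mul, hc]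
    have e1 : (√(r:ℝ))⁻¹ * √(r:ℝ) = 1 := inv_mul_cancel₀ (by positivity)
    have e2 : (r:ℝ) * (r:ℝ)⁻¹ = 1 := mul_inv_cancel₀ (by positivity)
    rw [mul_assoc, e1, e2]
    ring
  have hmem : i ∈ s := by simp [hs, hi]
  have hzero := (Finset.sum_eq_zero_iff_of_nonneg fun j _ => sq_nonneg _).mp key i hmem
  have : Real.sqrt (lam i) = c := by
    have := pow_eq_zero_iff (n := 2) (by norm_num) |>.mp hzero
    linarith [sub_eq_zero.mp this]
  calc lam i = Real.sqrt (lam i) ^ 2 := (Real.sq_sqrt (hnn i)).symm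
    _ = c ^ 2 := by rw [this]
    _ = (r : ℝ)⁻¹ := hcsq

lemma rho1_eq_mul_conjTranspose (n m : ℕ) (w : Fin n × Fin m → ℂ) :
    rho1 n m w = (Matrix.of fun p j => w (p, j)) * (Matrix.of fun p j => w (p, j))ᴴ := by
  ext p k
  simp [rho1, Matrix.mul_apply]

lemma trace_sqrt_of_maxEntangled {n m : ℕ} {w : Fin n × Fin m → ℂ}
    (hr : 0 < min n m) (hw : MaxEntangled n m w) :
    (psdSqrt (rho1_posSemidef n m w)).trace = ((Real.sqrt ((min n m : ℕ) : ℝ) : ℝ) : ℂ) := by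
  obtain ⟨x, y, hx, hy, hrep⟩ := hw
  simp only [← Nat.cast_min] at hrep
  have hrR : (0 : ℝ) < min n m := by exact_mod_cast hr
  set X : Matrix (Fin n) (Fin (min n m)) ℂ := Matrix.of fun p i => x i p with hXdef
  set Y : Matrix (Fin m) (Fin (min n m)) ℂ := Matrix.of fun q i => y i q with hYdef
  have hXX : Xᴴ * X = 1 := by
    ext i i'
    have h := orthonormal_iff_ite.mp hx i i'
    simp only [PiLp.inner_apply, RCLike.inner_apply] at h
    simp only [Matrix.mul_apply, Matrix.conjTranspose_apply, hXdef, Matrix.of_apply,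
      Matrix.one_apply]
    rw [← h]; exact Finset.sum_congr rfl fun j _ => mul_comm _ _
  have hYY : Yᵀ * Yᵀᴴ = 1 := by
    ext i i'
    have h := orthonormal_iff_ite.mp hy i' i
    simp only [PiLp.inner_apply, RCLike.inner_apply] at h
    simp only [Matrix.mul_apply, Matrix.conjTranspose_apply, Matrix.transpose_apply, hYdef,
      Matrix.of_apply, Matrix.one_apply]
    calc ∑ q, y i q * star (y i' q)
        = ∑ q, (starRingEnd ℂ) (y i' q) * y i q := Finset.sum_congr rfl fun q _ => mul_comm _ _
      _ = if i' = i then 1 else 0 := by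
          rw [← h]; exact Finset.sum_congr rfl fun q _ => mul_comm _ _
      _ = if i = i' then 1 else 0 := by
          by_cases hii : i = i'
          · simp [hii]
          · rw [if_neg (fun h => hii h.symm), if_neg hii]
  set c : ℝ := 1 / Real.sqrt ((min n m : ℕ) : ℝ) with hcdef
  have hW : (Matrix.of fun p j => w (p, j)) = (c : ℂ) • (X * Yᵀ) := by
    ext p j
    simp only [Matrix.of_apply, Matrix.smul_apply, smul_eq_mul, Matrix.mul_apply,
      Matrix.transpose_apply, hXdef, hYdef]
    exact hrep (p, j)
  have hstar_c : star ((c : ℝ) : ℂ) = ((c : ℝ) : ℂ) := by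
    rw [Complex.star_def, Complex.conj_ofReal]
  have hrho : rho1 n m w = (((c : ℝ) ^ 2 : ℝ) : ℂ) • (X * Xᴴ) := by
    rw [rho1_eq_mul_conjTranspose, hW, Matrix.conjTranspose_smul, hstar_c,
      Matrix.smul_mul, Matrix.mul_smul, smul_smul]
    rw [Matrix.conjTranspose_mul, Matrix.mul_assoc, ← Matrix.mul_assoc Yᵀ, hYY,
      Matrix.one_mul]
    rw [← Complex.ofReal_mul, pow_two]
  set M : Matrix (Fin n) (Fin n) ℂ := X * Xᴴ with hMdef
  have hMpsd : M.PosSemidef := posSemidef_self_mul_conjTranspose _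
  have hMsq : M * M = M := by
    rw [hMdef, Matrix.mul_assoc, ← Matrix.mul_assoc Xᴴ, hXX, Matrix.one_mul]
  have htrM : M.trace = ((min n m : ℕ) : ℂ) := by
    rw [hMdef, Matrix.trace_mul_comm, hXX, Matrix.trace_one]
    simp
  have hc2 : (c : ℝ) ^ 2 = ((min n m : ℕ) : ℝ)⁻¹ := by
    rw [hcdef, div_pow, one_pow, Real.sq_sqrt hrR.le, one_div]
  have hsq : (((Real.sqrt ((min n m : ℕ) : ℝ))⁻¹ : ℝ) : ℂ) • M = psdSqrt (rho1_posSemidef n m w) := by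
    apply Matrix.PosSemidef.eq_sqrt_of_sq_eq
    · exact posSemidef_smul_real hMpsd (by positivity)
    · rw [pow_two, Matrix.smul_mul, Matrix.mul_smul, smul_smul, hMsq, hrho, hc2]
      congr 1
      rw [← Complex.ofReal_mul, ← Real.sqrt_inv, Real.mul_self_sqrt (by positivity)]
  rw [← hsq, Matrix.trace_smul, htrM, smul_eq_mul, ← Complex.ofReal_natCast,
    ← Complex.ofReal_mul]
  congr 1
  rw [inv_mul_eq_div, Real.div_sqrt]

lemma maxEntangled_of_eigs {n m : ℕ} {w : Fin n × Fin m → ℂ}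
    (hcard : (Finset.univ.filter fun i =>
        (rho1_posSemidef n m w).1.eigenvalues i ≠ 0).card = min n m)
    (hval : ∀ i, (rho1_posSemidef n m w).1.eigenvalues i ≠ 0 →
        (rho1_posSemidef n m w).1.eigenvalues i = ((min n m : ℕ) : ℝ)⁻¹)
    (hr : 0 < min n m) :
    MaxEntangled n m w := by
  classical
  set hA := (rho1_posSemidef n m w).1 with hAdef
  set lam := hA.eigenvalues with hlamdef
  set b := hA.eigenvectorBasis with hbdef
  set B : Matrix (Fin n) (Fin n) ℂ := (hA.eigenvectorUnitary : Matrix (Fin n) (Fin n) ℂ)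
    with hBdef
  set W : Matrix (Fin n) (Fin m) ℂ := Matrix.of fun p j => w (p, j) with hWdef
  set D : Matrix (Fin n) (Fin m) ℂ := Bᴴ * W with hDdef
  have hrR : (0 : ℝ) < ((min n m : ℕ) : ℝ) := by exact_mod_cast hr
  have hBW : B * D = W := by
    rw [hDdef, ← Matrix.mul_assoc, ← Matrix.star_eq_conjTranspose,
      (Matrix.mem_unitaryGroup_iff).mp hA.eigenvectorUnitary.2, Matrix.one_mul]
  have hDD : D * Dᴴ = diagonal (RCLike.ofReal ∘ lam) := by
    rw [hDdef, Matrix.conjTranspose_mul, Matrix.conjTranspose_conjTranspose]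
    calc Bᴴ * W * (Wᴴ * B) = Bᴴ * (W * Wᴴ) * B := by
          rw [Matrix.mul_assoc, Matrix.mul_assoc, Matrix.mul_assoc]
      _ = Bᴴ * rho1 n m w * B := by rw [← rho1_eq_mul_conjTranspose]
      _ = diagonal (RCLike.ofReal ∘ lam) := by
          rw [← Matrix.star_eq_conjTranspose]
          have h := Matrix.IsHermitian.conjStarAlgAut_star_eigenvectorUnitary
            (rho1_posSemidef n m w).1
          rw [Unitary.conjStarAlgAut_apply, Unitary.coe_star, star_star] at h
          exact h
  -- entries of D * Dᴴ
  have hDDe : ∀ i k, ∑ q, D i q * star (D k q) =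
      if i = k then ((lam i : ℝ) : ℂ) else 0 := by
    intro i k
    have := congrFun (congrFun (congrArg (fun M => (M : Matrix _ _ ℂ)) hDD) i) k
    simpa [Matrix.mul_apply, Matrix.diagonal_apply] using this
  -- rows with zero eigenvalue vanish
  have hzero : ∀ i, lam i = 0 → ∀ q, D i q = 0 := by
    intro i hi q
    have h0 : ∑ q, D i q * star (D i q) = 0 := by rw [hDDe i i, if_pos rfl, hi]; simp
    have h1 : ∑ q, (Complex.normSq (D i q) : ℝ) = 0 := by
      have := congrArg Complex.re h0
      simpa [Complex.mul_conj] using this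
    have h2 := (Finset.sum_eq_zero_iff_of_nonneg
      (fun q _ => Complex.normSq_nonneg (D i q))).mp h1 q (Finset.mem_univ q)
    exact Complex.normSq_eq_zero.mp h2
  -- index the nonzero eigenvalues
  have hcard' : Fintype.card {i // lam i ≠ 0} = min n m := by
    rw [Fintype.card_subtype]; exact hcard
  set e : Fin (min n m) ≃ {i // lam i ≠ 0} := (Fintype.equivFinOfCardEq hcard').symm
    with hedef
  set x : Fin (min n m) → EuclideanSpace ℂ (Fin n) := fun j => b (e j) with hxdef
  set y : Fin (min n m) → EuclideanSpace ℂ (Fin m) :=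
    fun j => WithLp.toLp 2 fun q => (Real.sqrt ((min n m : ℕ) : ℝ) : ℂ) * D (e j) q with hydef
  have hval' : ∀ j : Fin (min n m), lam (e j) = ((min n m : ℕ) : ℝ)⁻¹ :=
    fun j => hval _ (e j).2
  have hx : Orthonormal ℂ x := by
    have hinj : Function.Injective fun j : Fin (min n m) => ((e j : {i // lam i ≠ 0}) : Fin n) :=
      Subtype.val_injective.comp e.injective
    exact b.orthonormal.comp _ hinj
  have hy : Orthonormal ℂ y := by
    rw [orthonormal_iff_ite]
    intro i j
    simp only [PiLp.inner_apply, RCLike.inner_apply]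
    have hterm : ∀ q, (starRingEnd ℂ) (y i q) * y j q =
        ((Real.sqrt ((min n m : ℕ) : ℝ) : ℂ) * (Real.sqrt ((min n m : ℕ) : ℝ) : ℂ)) *
          ((starRingEnd ℂ) (D (e i) q) * D (e j) q) := by
      intro q
      simp only [hydef, PiLp.toLp_apply]
      rw [_root_.map_mul, Complex.conj_ofReal]
      ring
    rw [Finset.sum_congr rfl fun q _ => (mul_comm _ _).trans (hterm q), ← Finset.mul_sum]
    have hsum : ∑ q, (starRingEnd ℂ) (D (e i) q) * D (e j) q =
        if i = j then ((((min n m : ℕ) : ℝ)⁻¹ : ℝ) : ℂ) else 0 := by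
      have h := hDDe (e i) (e j)
      have h' : ∑ q, (starRingEnd ℂ) (D (e i) q) * D (e j) q =
          star (∑ q, D (e i) q * star (D (e j) q)) := by
        rw [star_sum]
        refine Finset.sum_congr rfl fun q _ => ?_
        simp only [star_mul', star_star, Complex.star_def, Complex.conj_conj]
      rw [h', h]
      by_cases hij : i = j
      · subst hij
        rw [if_pos rfl, if_pos rfl, Complex.star_def, Complex.conj_ofReal, hval' i]
      · have hne : ¬((e i : Fin n) = (e j : Fin n)) := by
          intro hc
          exact hij (e.injective (Subtype.val_injective hc))
        rw [if_neg hne, if_neg hij, star_zero]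
    rw [hsum]
    by_cases hij : i = j
    · rw [if_pos hij, if_pos hij]
      norm_cast
      rw [Real.mul_self_sqrt hrR.le, mul_inv_cancel₀ (ne_of_gt hrR)]
    · rw [if_neg hij, if_neg hij, mul_zero]
  refine ⟨x, y, hx, hy, ?_⟩
  intro p
  simp only [← Nat.cast_min]
  -- reconstruction
  have hrec : w p = ∑ i : Fin n, b i p.1 * D i p.2 := by
    have : w p = (B * D) p.1 p.2 := by rw [hBW]; rfl
    rw [this, Matrix.mul_apply]
    refine Finset.sum_congr rfl fun i _ => ?_
    rw [hBdef, hA.eigenvectorUnitary_apply]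
  have hside : ∀ i ∈ Finset.univ, b i p.1 * D i p.2 ≠ 0 → lam i ≠ 0 := by
    intro i _ hne hlz
    exact hne (by rw [hzero i hlz p.2, mul_zero])
  have hsubtype : ∑ i : Fin n, b i p.1 * D i p.2
      = ∑ i : {i // lam i ≠ 0}, b (i : Fin n) p.1 * D (i : Fin n) p.2 := by
    rw [← Finset.sum_filter_of_ne hside]
    exact Finset.sum_subtype _ (by simp) _
  have hreindex : ∑ i : {i // lam i ≠ 0}, b (i : Fin n) p.1 * D (i : Fin n) p.2
      = ∑ j : Fin (min n m), b (e j) p.1 * D (e j) p.2 :=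
    (Equiv.sum_comp e fun i => b (i : Fin n) p.1 * D (i : Fin n) p.2).symm
  rw [hrec, hsubtype, hreindex, Finset.mul_sum]
  refine Finset.sum_congr rfl fun j _ => ?_
  have : x j p.1 * y j p.2
      = (Real.sqrt ((min n m : ℕ) : ℝ) : ℂ) * (b (e j) p.1 * D (e j) p.2) := by
    simp only [hxdef, hydef, PiLp.toLp_apply]
    ring
  rw [this, ← mul_assoc, ← Complex.ofReal_mul]
  rw [one_div, inv_mul_cancel₀ (by positivity)]
  simp

lemma conjTranspose_kron {a b : Type*} (A : Matrix a a ℂ) (B : Matrix b b ℂ) :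
    (A ⊗ₖ B)ᴴ = Aᴴ ⊗ₖ Bᴴ := by
  ext p q
  simp [Matrix.conjTranspose_apply, Matrix.kroneckerMap_apply, star_mul']

lemma posSemidef_kron {a b : Type*} [Fintype a] [Fintype b] [DecidableEq a] [DecidableEq b]
    {A : Matrix a a ℂ} {B : Matrix b b ℂ} (hA : A.PosSemidef) (hB : B.PosSemidef) :
    (A ⊗ₖ B).PosSemidef := by
  have h : A ⊗ₖ B = (psdSqrt hA ⊗ₖ psdSqrt hB)ᴴ * (psdSqrt hA ⊗ₖ psdSqrt hB) := by
    rw [conjTranspose_kron, hA.posSemidef_sqrt.1, hB.posSemidef_sqrt.1,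
      ← Matrix.mul_kronecker_mul, hA.sqrt_mul_self, hB.sqrt_mul_self]
  rw [h]
  exact posSemidef_conjTranspose_mul_self _

lemma sqrt_congr {a : Type*} [Fintype a] [DecidableEq a] {A B : Matrix a a ℂ}
    (h : A = B) (hA : A.PosSemidef) (hB : B.PosSemidef) : psdSqrt hA = psdSqrt hB := by
  subst h; rfl

lemma sqrt_kron {a b : Type*} [Fintype a] [Fintype b] [DecidableEq a] [DecidableEq b]
    {A : Matrix a a ℂ} {B : Matrix b b ℂ} (hA : A.PosSemidef) (hB : B.PosSemidef) :
    psdSqrt (posSemidef_kron hA hB) = psdSqrt hA ⊗ₖ psdSqrt hB := by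
  refine ((posSemidef_kron hA.posSemidef_sqrt hB.posSemidef_sqrt).eq_sqrt_of_sq_eq
    (posSemidef_kron hA hB) ?_).symm
  rw [pow_two, ← Matrix.mul_kronecker_mul, hA.sqrt_mul_self, hB.sqrt_mul_self]

lemma sqrt_transpose {a : Type*} [Fintype a] [DecidableEq a] {A : Matrix a a ℂ}
    (hA : A.PosSemidef) : psdSqrt hA.transpose = (psdSqrt hA)ᵀ := by
  refine ((hA.posSemidef_sqrt.transpose).eq_sqrt_of_sq_eq hA.transpose ?_).symm
  rw [pow_two, ← Matrix.transpose_mul, hA.sqrt_mul_self]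

lemma AHA_eq (n m : ℕ) (u v : Fin n × Fin m → ℂ) :
    (ptranspose (outer u v))ᴴ * ptranspose (outer u v)
      = (rho1 n m u)ᵀ ⊗ₖ (rho1 m n (fun qp => v (qp.2, qp.1))) := by
  ext ⟨k, l⟩ ⟨k', l'⟩
  simp only [Matrix.mul_apply, Matrix.conjTranspose_apply, Matrix.kroneckerMap_apply,
    Matrix.transpose_apply, rho1, Matrix.of_apply, ptranspose, outer]
  rw [Finset.sum_mul_sum, Fintype.sum_prod_type, Finset.sum_comm]
  refine Finset.sum_congr rfl fun p1 _ => Finset.sum_congr rfl fun p2 _ => ?_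
  simp only [star_mul', star_star, Complex.star_def, Complex.conj_conj]
  ring

lemma maxEntangled_swap {n m : ℕ} {w : Fin n × Fin m → ℂ} (h : MaxEntangled n m w) :
    MaxEntangled m n (fun qp => w (qp.2, qp.1)) := by
  obtain ⟨x, y, hx, hy, hrep⟩ := h
  refine ⟨fun j => y (finCongr (Nat.min_comm m n) j),
    fun j => x (finCongr (Nat.min_comm m n) j),
    hy.comp _ (finCongr _).injective, hx.comp _ (finCongr _).injective, ?_⟩
  intro p
  show w (p.2, p.1) = _
  rw [hrep (p.2, p.1)]
  have hc : (min (m : ℝ) (n : ℝ)) = (min (n : ℝ) (m : ℝ)) := min_comm _ _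
  rw [hc]
  congr 1
  rw [← Equiv.sum_comp (finCongr (Nat.min_comm m n))
    (fun i => x i p.2 * y i p.1)]
  exact Finset.sum_congr rfl fun j _ => mul_comm _ _

/-- the key quantitative facts about the eigenvalue square-root sum of `rho1` -/
lemma key {n m : ℕ} (w : Fin n × Fin m → ℂ) (hw : ∑ p, ‖w p‖ ^ 2 = (1 : ℝ))
    (hr : 0 < min n m) :
    0 ≤ (∑ i, Real.sqrt ((rho1_posSemidef n m w).1.eigenvalues i)) ∧
    (∑ i, Real.sqrt ((rho1_posSemidef n m w).1.eigenvalues i))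
      ≤ Real.sqrt ((min n m : ℕ) : ℝ) ∧
    ((∑ i, Real.sqrt ((rho1_posSemidef n m w).1.eigenvalues i))
      = Real.sqrt ((min n m : ℕ) : ℝ) ↔ MaxEntangled n m w) := by
  classical
  set lam := (rho1_posSemidef n m w).1.eigenvalues with hlam
  have hnn : ∀ i, 0 ≤ lam i := fun i => (rho1_posSemidef n m w).eigenvalues_nonneg i
  have hsum : ∑ i, lam i = 1 := by
    have h1 := trace_eq_sum_eigenvalues (rho1_posSemidef n m w).1
    rw [rho1_trace hw] at h1
    exact_mod_cast h1.symm
  have hcard : (Finset.univ.filter fun i => lam i ≠ 0).card ≤ min n m := by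
    have h1 : (Finset.univ.filter fun i => lam i ≠ 0).card
        = Fintype.card {i // lam i ≠ 0} := (Fintype.card_subtype _).symm
    rw [h1, ← (rho1_posSemidef n m w).1.rank_eq_card_non_zero_eigs]
    exact rho1_rank_le n m w
  refine ⟨Finset.sum_nonneg fun i _ => Real.sqrt_nonneg _,
    sum_sqrt_le_sqrt_card lam hnn hsum hcard, ?_, ?_⟩
  · intro heq
    obtain ⟨hc, hval⟩ := eigs_of_sum_sqrt_eq lam hnn hsum hcard heq
    exact maxEntangled_of_eigs hc hval hr
  · intro hme
    have h1 := trace_sqrt (rho1_posSemidef n m w)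
    rw [trace_sqrt_of_maxEntangled hr hme] at h1
    exact_mod_cast h1.symm


end AuxPT

open AuxPT in
/-- For unit vectors `u, v` in `ℂⁿ ⊗ ℂᵐ`, `‖(T ⊗ I)(uv*)‖₁ ≤ min n m`, with equality
iff both `u` and `v` are maximally entangled. -/
theorem stmt2 (n m : ℕ) (u v : Fin n × Fin m → ℂ)
    (hu : ∑ p, ‖u p‖ ^ 2 = (1 : ℝ)) (hv : ∑ p, ‖v p‖ ^ 2 = (1 : ℝ)) :
    traceNorm (ptranspose (outer u v)) ≤ (min n m : ℕ) ∧
    (traceNorm (ptranspose (outer u v)) = (min n m : ℕ) ↔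
      MaxEntangled n m u ∧ MaxEntangled n m v) := by
  classical
  have hn : 0 < n := by
    rcases Nat.eq_zero_or_pos n with h | h
    · subst h
      rw [Finset.univ_eq_empty, Finset.sum_empty] at hu
      norm_num at hu
    · exact h
  have hm : 0 < m := by
    rcases Nat.eq_zero_or_pos m with h | h
    · subst h
      rw [Finset.univ_eq_empty, Finset.sum_empty] at hu
      norm_num at hu
    · exact h
  have hr : 0 < min n m := lt_min hn hm
  have hrR : (0 : ℝ) < ((min n m : ℕ) : ℝ) := by exact_mod_cast hr
  set vsw : Fin m × Fin n → ℂ := fun qp => v (qp.2, qp.1) with hvswdef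
  have hv' : ∑ p, ‖vsw p‖ ^ 2 = (1 : ℝ) := by
    rw [← hv, Fintype.sum_prod_type, Fintype.sum_prod_type]
    exact Finset.sum_comm
  have hr' : 0 < min m n := lt_min hm hn
  have hmin : ((min m n : ℕ) : ℝ) = ((min n m : ℕ) : ℝ) := by rw [Nat.min_comm]
  set s : ℝ := Real.sqrt ((min n m : ℕ) : ℝ) with hsdef
  have hspos : 0 < s := Real.sqrt_pos.mpr hrR
  set Tu : ℝ := ∑ i, Real.sqrt ((rho1_posSemidef n m u).1.eigenvalues i) with hTudef
  set Tv : ℝ := ∑ i, Real.sqrt ((rho1_posSemidef m n vsw).1.eigenvalues i) with hTvdef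
  obtain ⟨hTu0, hTule, hTuiff⟩ := key u hu hr
  obtain ⟨hTv0, hTvle, hTviff⟩ := key vsw hv' hr'
  rw [hmin] at hTvle hTviff
  -- compute the trace norm
  have htn : traceNorm (ptranspose (outer u v)) = Tu * Tv := by
    unfold traceNorm
    rw [sqrt_congr (AHA_eq n m u v) (posSemidef_conjTranspose_mul_self _)
      (posSemidef_kron (rho1_posSemidef n m u).transpose (rho1_posSemidef m n vsw))]
    rw [sqrt_kron (rho1_posSemidef n m u).transpose (rho1_posSemidef m n vsw),
      sqrt_transpose (rho1_posSemidef n m u), Matrix.trace_kronecker, Matrix.trace_transpose,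
      trace_sqrt (rho1_posSemidef n m u), trace_sqrt (rho1_posSemidef m n vsw),
      ← Complex.ofReal_mul, Complex.ofReal_re]
  have hss : s * s = ((min n m : ℕ) : ℝ) := Real.mul_self_sqrt hrR.le
  constructor
  · rw [htn]
    calc Tu * Tv ≤ s * s := mul_le_mul hTule hTvle hTv0 hspos.le
      _ = _ := hss
  · rw [htn]
    constructor
    · intro heq
      have heq' : Tu * Tv = s * s := by rw [heq, hss]
      have hTv_eq : Tv = s := by
        have h1 : Tu * Tv ≤ s * Tv := mul_le_mul_of_nonneg_right hTule hTv0
        rw [heq'] at h1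
        have h2 : s ≤ Tv := le_of_mul_le_mul_left h1 hspos
        exact le_antisymm hTvle h2
      have hTu_eq : Tu = s := by
        rw [hTv_eq] at heq'
        exact mul_right_cancel₀ (ne_of_gt hspos) heq'
      refine ⟨hTuiff.mp hTu_eq, ?_⟩
      exact maxEntangled_swap (hTviff.mp hTv_eq)
    · rintro ⟨h1, h2⟩
      have e1 : Tu = s := hTuiff.mpr h1
      have e2 : Tv = s := hTviff.mpr (maxEntangled_swap h2)
      rw [e1, e2, hss]
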